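/- Let E be the Euclidean space ℝ^d with its standard inner product, let x0 ∈ E, let e ∈ E be a unit vector, and let a > 0, s0 > 0 be real numbers. Define v(x) = 1/s0 + a⟨e, x − x0⟩ and κ(x) = 1/v(x) on the open set U = { x : x ≠ x0 and v(x) > 0 }, and define τ(x) = (1/a)·arcosh( 1 + (1/2)s0·a²·κ(x)·‖x − x0‖² ), where arcosh(y) = log(y + sqrt(y² − 1)) for y ≥ 1. Then at every point x ∈ U, the function τ is differentiable and satisfies the eikonal equation ‖∇τ(x)‖² = κ(x)². -/

import Mathlib

open RealInnerProductSpace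

/-- The inverse hyperbolic cosine `arcosh(y) = log(y + sqrt(y² − 1))`. -/
noncomputable def arcosh (y : ℝ) : ℝ :=
  Real.log (y + Real.sqrt (y ^ 2 - 1))

/-- The slowness `κ(x) = (1/s0 + a ⟪e, x − x0⟫)⁻¹` for a medium with constant
gradient of velocity. -/
noncomputable def kappaCase2 {d : ℕ} (x0 e : EuclideanSpace ℝ (Fin d))
    (a s0 : ℝ) (x : EuclideanSpace ℝ (Fin d)) : ℝ :=
  (1 / s0 + a * ⟪e, x - x0⟫)⁻¹

/-- The exact travel time
`τ(x) = (1/a)·arcosh(1 + (1/2) s0 a² κ(x) ‖x − x0‖²)` for a medium with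
constant gradient of velocity. -/
noncomputable def tauCase2 {d : ℕ} (x0 e : EuclideanSpace ℝ (Fin d))
    (a s0 : ℝ) (x : EuclideanSpace ℝ (Fin d)) : ℝ :=
  (1 / a) * arcosh (1 + (1 / 2) * s0 * a ^ 2 * kappaCase2 x0 e a s0 x * ‖x - x0‖ ^ 2)

lemma hasDerivAt_arcosh {y : ℝ} (hy : 1 < y) :
    HasDerivAt arcosh (Real.sqrt (y ^ 2 - 1))⁻¹ y := by
  have h1 : (0:ℝ) < y ^ 2 - 1 := by nlinarith
  have hs : 0 < Real.sqrt (y ^ 2 - 1) := Real.sqrt_pos.mpr h1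
  have hsq : Real.sqrt (y ^ 2 - 1) ^ 2 = y ^ 2 - 1 := Real.sq_sqrt h1.le
  have hd1 : HasDerivAt (fun t : ℝ => t ^ 2 - 1) (2 * y) y := by
    simpa using (hasDerivAt_pow 2 y).sub_const 1
  have hd2 : HasDerivAt (fun t : ℝ => Real.sqrt (t ^ 2 - 1))
      (1 / (2 * Real.sqrt (y ^ 2 - 1)) * (2 * y)) y :=
    (Real.hasDerivAt_sqrt h1.ne').comp y hd1
  have hd3 : HasDerivAt (fun t : ℝ => t + Real.sqrt (t ^ 2 - 1))
      (1 + 1 / (2 * Real.sqrt (y ^ 2 - 1)) * (2 * y)) y :=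
    (hasDerivAt_id y).add hd2
  have hpos : 0 < y + Real.sqrt (y ^ 2 - 1) := by linarith
  have hd4 := hd3.log hpos.ne'
  have : (1 + 1 / (2 * Real.sqrt (y ^ 2 - 1)) * (2 * y)) / (y + Real.sqrt (y ^ 2 - 1))
      = (Real.sqrt (y ^ 2 - 1))⁻¹ := by
    field_simp
    nlinarith [hsq]
  rw [this] at hd4
  exact hd4

lemma eikonal_alg {a s0 c r v w : ℝ} (ha : 0 < a) (hs0 : 0 < s0) (hr : 0 < r)
    (hv : 0 < v) (hveq : v = 1 / s0 + a * c)
    (hw : w = 1 + 1 / 2 * s0 * a ^ 2 * v⁻¹ * r) :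
    (1 / 2 * s0 * a) ^ 2 * (w ^ 2 - 1)⁻¹ *
      ((v⁻¹ * 2) ^ 2 * r + 2 * (v⁻¹ * 2) * (-(v ^ 2)⁻¹ * a * r) * c
        + (-(v ^ 2)⁻¹ * a * r) ^ 2) = (v⁻¹) ^ 2 := by
  have hwm : w ^ 2 - 1 = s0 * a ^ 2 * r * (4 * v + s0 * a ^ 2 * r) / (4 * v ^ 2) := by
    rw [hw]; field_simp; ring
  have h4 : 0 < 4 * v + s0 * a ^ 2 * r := by positivity
  have hcc : c = (v - 1 / s0) / a := by rw [hveq]; field_simp; ring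
  rw [hwm, hcc]
  field_simp
  ring

set_option maxHeartbeats 1000000 in
/-- Test case 2 (constant gradient of velocity): for `a > 0`, `s0 > 0`, on the
open set where `x ≠ x0` and `1/s0 + a⟪e, x − x0⟫ > 0`, the function `τ` is
differentiable and satisfies the eikonal equation `‖∇τ(x)‖² = κ(x)²`. -/
theorem eikonal_constant_gradient_velocity (d : ℕ)
    (x0 e : EuclideanSpace ℝ (Fin d)) (he : ‖e‖ = 1) (a s0 : ℝ)
    (ha : 0 < a) (hs0 : 0 < s0) :
    ∀ x : EuclideanSpace ℝ (Fin d), x ≠ x0 →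
      1 / s0 + a * ⟪e, x - x0⟫ > 0 →
      DifferentiableAt ℝ (tauCase2 x0 e a s0) x ∧
      ‖gradient (tauCase2 x0 e a s0) x‖ ^ 2 = (kappaCase2 x0 e a s0 x) ^ 2 := by
  intro x hx hv
  set c : ℝ := ⟪e, x - x0⟫ with hc
  set v : ℝ := 1 / s0 + a * c with hvdef
  set r : ℝ := ‖x - x0‖ ^ 2 with hr
  have hrpos : 0 < r := by
    have h' : x - x0 ≠ 0 := sub_ne_zero.mpr hx
    rw [hr]; exact pow_pos (norm_pos_iff.mpr h') 2
  have hvpos : 0 < v := by rw [hvdef, hc]; exact hv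
  set w : ℝ := 1 + (1 / 2) * s0 * a ^ 2 * v⁻¹ * r with hwdef
  have hw1 : 1 < w := by
    have h2 : 0 < (1 / 2) * s0 * a ^ 2 * v⁻¹ * r :=
      mul_pos (mul_pos (mul_pos (mul_pos (by norm_num) hs0) (pow_pos ha 2))
        (inv_pos.mpr hvpos)) hrpos
    simp only [hwdef]; linarith
  set q : ℝ := Real.sqrt (w ^ 2 - 1) with hq
  have hw2 : (0:ℝ) < w ^ 2 - 1 := by nlinarith
  have hqpos : 0 < q := Real.sqrt_pos.mpr hw2
  have hq2 : q ^ 2 = w ^ 2 - 1 := Real.sq_sqrt hw2.le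
  -- derivative of x ↦ ⟪e, x − x0⟫
  have h1 : HasFDerivAt (fun y : EuclideanSpace ℝ (Fin d) => ⟪e, y - x0⟫) (innerSL ℝ e) x := by
    have h := (innerSL ℝ e).hasFDerivAt (x := x) |>.sub_const ⟪e, x0⟫
    simp only [innerSL_apply_apply] at h
    have hfun : (fun y : EuclideanSpace ℝ (Fin d) => ⟪e, y⟫ - ⟪e, x0⟫) = fun y : EuclideanSpace ℝ (Fin d) => ⟪e, y - x0⟫ := by
      funext y; rw [inner_sub_right]
    rwa [hfun] at h
  -- derivative of v
  have hvD : HasFDerivAt (fun y : EuclideanSpace ℝ (Fin d) => 1 / s0 + a * ⟪e, y - x0⟫)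
      (a • innerSL ℝ e) x := (h1.const_mul a).const_add (1 / s0)
  -- derivative of κ = v⁻¹
  have hκD := (hasDerivAt_inv (ne_of_gt hv)).comp_hasFDerivAt x hvD
  -- derivative of r = ‖y − x0‖²
  have h0 : HasFDerivAt (fun y : EuclideanSpace ℝ (Fin d) => y - x0) (ContinuousLinearMap.id ℝ (EuclideanSpace ℝ (Fin d))) x :=
    (hasFDerivAt_id x).sub_const x0
  have hrD := h0.inner ℝ h0
  simp only [real_inner_self_eq_norm_sq] at hrD
  -- product
  have hprod := ((hκD.const_mul ((1 / 2) * s0 * a ^ 2)).mul hrD).const_add 1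
  -- arcosh composed
  have harc := (hasDerivAt_arcosh (y := w) hw1)
  have hwx : (1 + (1 / 2) * s0 * a ^ 2 * (1 / s0 + a * ⟪e, x - x0⟫)⁻¹ * ‖x - x0‖ ^ 2) = w := rfl
  have harc' : HasDerivAt arcosh q⁻¹
      (1 + (1 / 2) * s0 * a ^ 2 * (1 / s0 + a * ⟪e, x - x0⟫)⁻¹ * ‖x - x0‖ ^ 2) := by
    rw [hwx]; exact harc
  have harcw := harc'.comp_hasFDerivAt x hprod
  have htaufun : tauCase2 x0 e a s0 = fun y : EuclideanSpace ℝ (Fin d) =>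
      (1 / a) * arcosh (1 + (1 / 2) * s0 * a ^ 2 * (1 / s0 + a * ⟪e, y - x0⟫)⁻¹ * ‖y - x0‖ ^ 2) := rfl
  rw [htaufun]
  have hτD := harcw.const_mul (1 / a)
  -- the gradient vector
  set C : ℝ := (1 / a) * q⁻¹ * ((1 / 2) * s0 * a ^ 2) with hC
  set G : EuclideanSpace ℝ (Fin d) := (C * (v⁻¹ * 2)) • (x - x0) + (C * (-(v ^ 2)⁻¹ * a * r)) • e with hG
  have hGrad : HasGradientAt (fun y : EuclideanSpace ℝ (Fin d) =>
      (1 / a) * arcosh (1 + (1 / 2) * s0 * a ^ 2 * (1 / s0 + a * ⟪e, y - x0⟫)⁻¹ * ‖y - x0‖ ^ 2)) G x := by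
    rw [hasGradientAt_iff_hasFDerivAt]
    refine hτD.congr_fderiv ?_
    ext y
    simp only [ContinuousLinearMap.smul_apply, ContinuousLinearMap.add_apply,
      ContinuousLinearMap.comp_apply, ContinuousLinearMap.prod_apply,
      fderivInnerCLM_apply, innerSL_apply_apply, ContinuousLinearMap.id_apply,
      InnerProductSpace.toDual_apply_apply, hG, inner_add_left, inner_smul_left,
      real_inner_comm (x - x0) y, smul_eq_mul, RCLike.star_def, conj_trivial,
      ContinuousLinearMap.coe_smul', Pi.smul_apply, ContinuousLinearMap.neg_apply,
      Function.comp_apply]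
    rw [← hc, ← hvdef, ← hr]
    ring
  refine ⟨hGrad.differentiableAt, ?_⟩
  rw [hGrad.gradient]
  -- compute ‖G‖²
  have hnorm : ‖G‖ ^ 2 = (C * (v⁻¹ * 2)) ^ 2 * r
      + 2 * ((C * (v⁻¹ * 2)) * (C * (-(v ^ 2)⁻¹ * a * r))) * c
      + (C * (-(v ^ 2)⁻¹ * a * r)) ^ 2 := by
    rw [hG, @norm_add_sq_real, real_inner_smul_left, real_inner_smul_right,
      norm_smul, norm_smul]
    rw [real_inner_comm, ← hc, he]
    simp only [Real.norm_eq_abs, mul_pow, sq_abs, ← hr]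
    ring
  rw [hnorm]
  have hκx : kappaCase2 x0 e a s0 x = v⁻¹ := rfl
  rw [hκx]
  have hD : (C * (v⁻¹ * 2)) ^ 2 * r
      + 2 * ((C * (v⁻¹ * 2)) * (C * (-(v ^ 2)⁻¹ * a * r))) * c
      + (C * (-(v ^ 2)⁻¹ * a * r)) ^ 2
      = C ^ 2 * ((v⁻¹ * 2) ^ 2 * r + 2 * (v⁻¹ * 2) * (-(v ^ 2)⁻¹ * a * r) * c
        + (-(v ^ 2)⁻¹ * a * r) ^ 2) := by ring
  rw [hD]
  have hwm : w ^ 2 - 1 ≠ 0 := ne_of_gt hw2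
  have hC2 : C ^ 2 = ((1 / 2) * s0 * a) ^ 2 * (w ^ 2 - 1)⁻¹ := by
    rw [hC, ← hq2]
    field_simp
  rw [hC2]
  exact eikonal_alg ha hs0 hrpos hvpos hvdef hwdef
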